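/- If B is a Bernstein set in the real line and U is a nonempty open subset of B (in the subspace topology), then there exists a continuous function f : B → ℝ such that f(U) = ℝ (in particular f(U) contains a closed interval). -/

import Mathlib

open Set Topology

noncomputable section BernsteinAux

/-- Greedy binary approximation of `y`. -/
private noncomputable def bexp (y : ℝ) : ℕ → ℝ
  | 0 => 0
  | n+1 => if bexp y n + (2:ℝ)⁻¹^(n+1) ≤ y then bexp y n + (2:ℝ)⁻¹^(n+1) else bexp y n

private lemma bexp_succ (y : ℝ) (n : ℕ) :
    bexp y (n+1) = if bexp y n + (2:ℝ)⁻¹^(n+1) ≤ y then bexp y n + (2:ℝ)⁻¹^(n+1) else bexp y n :=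
  rfl

private lemma bexp_invar {y : ℝ} (h0 : 0 ≤ y) (h1 : y ≤ 1) :
    ∀ n, bexp y n ≤ y ∧ y ≤ bexp y n + (2:ℝ)⁻¹^n := by
  intro n
  induction n with
  | zero => simpa [bexp] using ⟨h0, h1⟩
  | succ n ih =>
    have hsplit : (2:ℝ)⁻¹^n = (2:ℝ)⁻¹^(n+1) + (2:ℝ)⁻¹^(n+1) := by
      rw [pow_succ]; ring
    by_cases h : bexp y n + (2:ℝ)⁻¹^(n+1) ≤ y
    · rw [bexp_succ, if_pos h]
      refine ⟨h, ?_⟩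
      calc y ≤ bexp y n + (2:ℝ)⁻¹^n := ih.2
        _ = bexp y n + (2:ℝ)⁻¹^(n+1) + (2:ℝ)⁻¹^(n+1) := by rw [hsplit]; ring
    · rw [bexp_succ, if_neg h]
      exact ⟨ih.1, (not_le.mp h).le⟩

/-- The value in `[0,1]` given by binary digits. -/
private noncomputable def val01 (g : ℕ → Bool) : ℝ :=
  ∑' n, if g n then (2:ℝ)⁻¹^(n+1) else 0

private lemma summable_halfpow : Summable (fun n : ℕ => (2:ℝ)⁻¹^(n+1)) := by
  have h : Summable (fun n : ℕ => (2:ℝ)⁻¹^n * 2⁻¹) :=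
    (summable_geometric_of_lt_one (by norm_num) (by norm_num)).mul_right _
  simpa [pow_succ] using h

private lemma val01_term_nonneg (g : ℕ → Bool) (n : ℕ) :
    0 ≤ (if g n then (2:ℝ)⁻¹^(n+1) else 0) := by
  split <;> positivity

private lemma val01_surj {y : ℝ} (h0 : 0 ≤ y) (h1 : y ≤ 1) :
    ∃ d : ℕ → Bool, val01 d = y := by
  classical
  set d : ℕ → Bool := fun n => decide (bexp y n + (2:ℝ)⁻¹^(n+1) ≤ y) with hd
  refine ⟨d, ?_⟩
  have hpartial : ∀ n, ∑ i ∈ Finset.range n, (if d i then (2:ℝ)⁻¹^(i+1) else 0) = bexp y n := by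
    intro n
    induction n with
    | zero => simp [bexp]
    | succ n ih =>
      rw [Finset.sum_range_succ, ih, bexp_succ]
      by_cases h : bexp y n + (2:ℝ)⁻¹^(n+1) ≤ y
      · have hdn : d n = true := by rw [hd]; exact decide_eq_true h
        rw [if_pos h, if_pos hdn]
      · have hdn : d n = false := by rw [hd]; exact decide_eq_false h
        rw [if_neg h, if_neg (by simp [hdn] : ¬ d n = true), add_zero]
  have htend : Filter.Tendsto (fun n => bexp y n) Filter.atTop (nhds y) := by
    rw [tendsto_iff_dist_tendsto_zero]
    apply squeeze_zero (fun n => dist_nonneg) (g := fun n : ℕ => (2:ℝ)⁻¹^n)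
    · intro n
      rw [Real.dist_eq, abs_le]
      have h := bexp_invar h0 h1 n
      constructor <;> [linarith [h.2]; linarith [h.1, pow_nonneg (by norm_num : (0:ℝ) ≤ 2⁻¹) n]]
    · exact tendsto_pow_atTop_nhds_zero_of_lt_one (by norm_num) (by norm_num)
  have hsum : HasSum (fun n => if d n then (2:ℝ)⁻¹^(n+1) else 0) y := by
    rw [hasSum_iff_tendsto_nat_of_nonneg (val01_term_nonneg d)]
    simpa only [hpartial] using htend
  exact hsum.tsum_eq

private lemma val01_continuous : Continuous (fun g : ℕ → Bool => val01 (fun n => g (2*n))) := by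
  show Continuous fun g : ℕ → Bool => ∑' n, if g (2*n) then (2:ℝ)⁻¹^(n+1) else 0
  apply continuous_tsum (u := fun n : ℕ => (2:ℝ)⁻¹^(n+1))
  · intro n
    have h1 : Continuous fun g : ℕ → Bool => g (2*n) := continuous_apply _
    exact (continuous_of_discreteTopology (f := fun b : Bool => if b then (2:ℝ)⁻¹^(n+1) else 0)).comp h1
  · exact summable_halfpow
  · intro n g
    have h0 : 0 ≤ (if g (2*n) then (2:ℝ)⁻¹^(n+1) else 0) := by split <;> positivity
    rw [Real.norm_eq_abs, abs_of_nonneg h0]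
    split
    · exact le_rfl
    · positivity

end BernsteinAux


private lemma uncountable_cantor : Uncountable (ℕ → Bool) := by
  refine ⟨fun h => ?_⟩
  obtain ⟨f, hf⟩ := countable_iff_exists_surjective.mp h
  obtain ⟨m, hm⟩ := hf (fun n => !(f n n))
  have := congrFun hm m
  simp at this

private lemma not_countable_Icc01 : ¬ (Icc (0:ℝ) 1).Countable := by
  intro h
  have h2 := Cardinal.le_aleph0_iff_set_countable.mpr h
  rw [Cardinal.mk_Icc_real zero_lt_one] at h2
  exact Cardinal.aleph0_lt_continuum.not_ge h2

/-- Core: a continuous `F : ℝ → ℝ` such that every `y ∈ [-M, M]` has an uncountable closed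
set inside `(c, d)` on which `F` is constantly `y`. -/
private lemma core_lemma (c d M : ℝ) (hcd : c < d) (hM : 0 < M) :
    ∃ F : ℝ → ℝ, Continuous F ∧ ∀ y ∈ Icc (-M) M, ∃ S : Set ℝ,
      S ⊆ Ioo c d ∧ IsClosed S ∧ ¬ S.Countable ∧ ∀ x ∈ S, F x = y := by
  classical
  obtain ⟨e0, he0range, he0cont, he0inj⟩ :=
    IsClosed.exists_nat_bool_injection_of_not_countable isClosed_Icc not_countable_Icc01
  -- rescale into (c,d)
  set c' : ℝ := c + (d - c)/3 with hc'
  set δ : ℝ := (d - c)/3 with hδ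
  have hδpos : 0 < δ := by rw [hδ]; linarith
  set e : (ℕ → Bool) → ℝ := fun g => c' + δ * e0 g with he
  have hecont : Continuous e := by
    exact continuous_const.add (continuous_const.mul he0cont)
  have heinj : Function.Injective e := by
    intro g h hgh
    apply he0inj
    have : δ * e0 g = δ * e0 h := by
      have := hgh; rw [he] at this; dsimp at this; linarith
    exact mul_left_cancel₀ (ne_of_gt hδpos) this
  have herange : ∀ g, e g ∈ Ioo c d := by
    intro g
    have h01 := he0range (mem_range_self g)
    obtain ⟨h0, h1⟩ := h01
    constructor
    · rw [he]; dsimp; nlinarith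
    · rw [he]; dsimp; nlinarith
  -- the value function, scaled to [-M, M]
  have hclosedemb : IsClosedEmbedding e := hecont.isClosedEmbedding heinj
  set w : (ℕ → Bool) → ℝ := fun g => -M + 2*M * val01 (fun n => g (2*n)) with hw
  have hwcont : Continuous w :=
    continuous_const.add (continuous_const.mul val01_continuous)
  obtain ⟨F, hF⟩ := ContinuousMap.exists_extension' hclosedemb ⟨w, hwcont⟩
  refine ⟨F, F.continuous, ?_⟩
  intro y hy
  set v : ℝ := (y + M)/(2*M) with hv
  have hv0 : 0 ≤ v := by rw [hv]; exact div_nonneg (by linarith [hy.1]) (by linarith)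
  have hv1 : v ≤ 1 := by
    rw [hv, div_le_one (by linarith)]; linarith [hy.2]
  obtain ⟨dg, hdg⟩ := val01_surj hv0 hv1
  set T : Set (ℕ → Bool) := {g | ∀ n, g (2*n) = dg n} with hT
  refine ⟨e '' T, ?_, ?_, ?_, ?_⟩
  · rintro x ⟨g, _, rfl⟩; exact herange g
  · -- closed: e '' T compact
    have hTclosed : IsClosed T := by
      have : T = ⋂ n, (fun g : ℕ → Bool => g (2*n)) ⁻¹' {dg n} := by
        ext g; simp [hT]
      rw [this]
      exact isClosed_iInter fun n => (isClosed_singleton).preimage (continuous_apply _)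
    exact ((hTclosed.isCompact).image hecont).isClosed
  · -- uncountable
    intro hcount
    set j : (ℕ → Bool) → (ℕ → Bool) := fun h k => if k % 2 = 0 then dg (k / 2) else h (k / 2)
      with hj
    have hjT : ∀ h, j h ∈ T := by
      intro h n
      simp only [hj]
      rw [if_pos (by omega)]
      congr 1
      omega
    have hjinj : Function.Injective j := by
      intro h h' hhh
      funext n
      have := congrFun hhh (2*n + 1)
      simp only [hj] at this
      rw [if_neg (by omega), if_neg (by omega)] at this
      simpa [Nat.add_mul_div_left, show (2*n+1)/2 = n by omega] using this
    have : Countable ↥(e '' T) := hcount.to_subtype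
    have hinj2 : Function.Injective (fun h : ℕ → Bool => (⟨e (j h), mem_image_of_mem e (hjT h)⟩ : ↥(e '' T))) := by
      intro h h' hhh
      apply hjinj
      apply heinj
      exact congrArg Subtype.val hhh
    have := hinj2.countable
    exact (uncountable_cantor.not_countable) this
  · rintro x ⟨g, hgT, rfl⟩
    have hFe : F (e g) = w g := congrFun hF g
    rw [hFe, hw]
    dsimp only
    have hgd : (fun n => g (2*n)) = dg := funext fun n => hgT n
    rw [hgd, hdg, hv]
    field_simp
    ring

/-- `B` is a Bernstein set: no uncountable closed subset of `ℝ` is contained in `B`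
or in its complement. -/
def IsBernstein (B : Set ℝ) : Prop :=
  ∀ C : Set ℝ, IsClosed C → ¬ C.Countable → ¬ (C ⊆ B) ∧ ¬ (C ⊆ Bᶜ)

private lemma not_countable_Icc {c d : ℝ} (h : c < d) : ¬ (Icc c d).Countable := by
  intro hc
  have h2 := Cardinal.le_aleph0_iff_set_countable.mpr hc
  rw [Cardinal.mk_Icc_real h] at h2
  exact Cardinal.aleph0_lt_continuum.not_ge h2

private lemma bern_compl (B : Set ℝ) (hB : IsBernstein B) {c d : ℝ} (h : c < d) :
    ∃ p, p ∈ Ioo c d ∧ p ∉ B := by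
  have h1 : c + (d-c)/3 < d - (d-c)/3 := by linarith
  obtain ⟨p, hp, hpB⟩ := not_subset.mp ((hB _ isClosed_Icc (not_countable_Icc h1)).1)
  exact ⟨p, ⟨by linarith [hp.1], by linarith [hp.2]⟩, hpB⟩

private lemma bern_meet (B : Set ℝ) (hB : IsBernstein B) (S : Set ℝ) (hS : IsClosed S)
    (hunc : ¬ S.Countable) : ∃ p ∈ S, p ∈ B := by
  obtain ⟨p, hpS, hp⟩ := not_subset.mp ((hB S hS hunc).2)
  exact ⟨p, hpS, not_not.mp hp⟩

/-- If `B` is a Bernstein set and `U` is a nonempty open subset of `B` (subspace topology),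
then there is a continuous `f : B → ℝ` with `f(U) = ℝ`. -/
theorem bernstein_open_image_univ (B : Set ℝ) (hB : IsBernstein B)
    (U : Set ↥B) (hU : IsOpen U) (hUne : U.Nonempty) :
    ∃ f : ↥B → ℝ, Continuous f ∧ f '' U = Set.univ := by
  classical
  obtain ⟨V, hVopen, hVU⟩ := isOpen_induced_iff.mp hU
  obtain ⟨x₀, hx₀U⟩ := hUne
  have hx₀V : (x₀ : ℝ) ∈ V := by rw [← hVU] at hx₀U; exact hx₀U
  obtain ⟨ε, hε, hball⟩ := Metric.isOpen_iff.mp hVopen _ hx₀V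
  set α : ℝ := (x₀ : ℝ) with hα
  obtain ⟨b, hbIoo, hbB⟩ := bern_compl B hB (show α < α + ε/2 by linarith)
  have hbα : α < b := hbIoo.1
  set m : ℕ → ℝ := fun n => b - (b - α) * (2:ℝ)⁻¹^n with hm
  have hhalf : ∀ n : ℕ, (0:ℝ) < (2:ℝ)⁻¹^n := fun n => pow_pos (by norm_num) n
  have hmlt : ∀ n, m n < m (n+1) := by
    intro n
    have hq : (2:ℝ)⁻¹^(n+1) < (2:ℝ)⁻¹^n := by
      rw [pow_succ]; nlinarith [hhalf n]
    simp only [hm]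
    nlinarith [sub_pos.mpr hbα]
  have hmb : ∀ n, m n < b := by
    intro n; simp only [hm]; nlinarith [hhalf n, sub_pos.mpr hbα]
  have hmge : ∀ n, α ≤ m n := by
    intro n
    have h1 : (2:ℝ)⁻¹^n ≤ 1 := pow_le_one₀ (by norm_num) (by norm_num)
    simp only [hm]; nlinarith [sub_pos.mpr hbα]
  have hsel : ∀ n, ∃ p, p ∈ Ioo (m n) (m (n+1)) ∧ p ∉ B := fun n => bern_compl B hB (hmlt n)
  choose t htIoo htB using hsel
  have htmono : StrictMono t :=
    strictMono_nat_of_lt_succ fun n => (htIoo n).2.trans (htIoo (n+1)).1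
  have htb : ∀ n, t n < b := fun n => (htIoo n).2.trans (hmb (n+1))
  have htα : ∀ n, α < t n := fun n => lt_of_le_of_lt (hmge n) (htIoo n).1
  have hIooV : ∀ n, Ioo (t n) (t (n+1)) ⊆ V := by
    intro n x hx
    apply hball
    rw [Metric.mem_ball, Real.dist_eq, abs_lt]
    have h1 : α < x := (htα n).trans hx.1
    have h2 : x < b := hx.2.trans (htb _)
    constructor <;> [linarith [hbIoo.2]; linarith [hbIoo.2]]
  have htendm : Filter.Tendsto m Filter.atTop (nhds b) := by
    have h1 : Filter.Tendsto (fun n : ℕ => (2:ℝ)⁻¹^n) Filter.atTop (nhds 0) :=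
      tendsto_pow_atTop_nhds_zero_of_lt_one (by norm_num) (by norm_num)
    have h2 := (tendsto_const_nhds (x := b) (f := Filter.atTop (α := ℕ))).sub
      (h1.const_mul (b - α))
    simpa [hm] using h2
  have htend : Filter.Tendsto t Filter.atTop (nhds b) := by
    apply tendsto_of_tendsto_of_tendsto_of_le_of_le htendm
      (htendm.comp (Filter.tendsto_add_atTop_nat 1))
    · exact fun n => (htIoo n).1.le
    · exact fun n => (htIoo n).2.le
  have hcore : ∀ n : ℕ, ∃ F : ℝ → ℝ, Continuous F ∧ ∀ y ∈ Icc (-(n+1:ℝ)) (n+1:ℝ),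
      ∃ S : Set ℝ, S ⊆ Ioo (t n) (t (n+1)) ∧ IsClosed S ∧ ¬ S.Countable ∧ ∀ x ∈ S, F x = y :=
    fun n => core_lemma _ _ _ (htmono (Nat.lt_succ_self n)) (by positivity)
  choose F hFcont hFfib using hcore
  have huniq : ∀ (k l : ℕ) (x : ℝ), x ∈ Ioo (t k) (t (k+1)) → x ∈ Ioo (t l) (t (l+1)) → k = l := by
    intro k l x hk hl
    by_contra hne
    rcases Nat.lt_or_ge k l with h | h
    · have h2 : t (k+1) ≤ t l := htmono.monotone h
      exact absurd (hk.2.trans_le h2) (not_lt.mpr hl.1.le)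
    · have hlk : l < k := lt_of_le_of_ne h (Ne.symm hne)
      have h2 : t (l+1) ≤ t k := htmono.monotone hlk
      exact absurd (hl.2.trans_le h2) (not_lt.mpr hk.1.le)
  set f : ↥B → ℝ := fun x =>
    if h : ∃ n, (x:ℝ) ∈ Ioo (t n) (t (n+1)) then F h.choose (x:ℝ) else 0 with hf
  have hfpiece : ∀ (n : ℕ) (x : ↥B), (x:ℝ) ∈ Ioo (t n) (t (n+1)) → f x = F n (x:ℝ) := by
    intro n x hx
    have hex : ∃ k, (x:ℝ) ∈ Ioo (t k) (t (k+1)) := ⟨n, hx⟩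
    simp only [hf]
    rw [dif_pos hex, huniq hex.choose n (x:ℝ) hex.choose_spec hx]
  have hfzero_lo : ∀ x : ↥B, (x:ℝ) < t 0 → f x = 0 := by
    intro x hx
    simp only [hf]
    rw [dif_neg]
    rintro ⟨n, hn⟩
    have h2 : t 0 ≤ t n := htmono.monotone (Nat.zero_le n)
    linarith [hn.1]
  have hfzero_hi : ∀ x : ↥B, b < (x:ℝ) → f x = 0 := by
    intro x hx
    simp only [hf]
    rw [dif_neg]
    rintro ⟨n, hn⟩
    linarith [hn.2, htb (n+1)]
  refine ⟨f, ?_, ?_⟩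
  · rw [continuous_iff_continuousAt]
    intro x
    have key : ∀ (O : Set ℝ), IsOpen O → (x:ℝ) ∈ O → ∀ g : ℝ → ℝ, Continuous g →
        (∀ z : ↥B, (z:ℝ) ∈ O → f z = g (z:ℝ)) → ContinuousAt f x := by
      intro O hO hxO g hg hfg
      have hca : ContinuousAt (fun z : ↥B => g (z:ℝ)) x :=
        (hg.comp continuous_subtype_val).continuousAt
      apply hca.congr
      have hnb : Subtype.val ⁻¹' O ∈ nhds x :=
        (hO.preimage continuous_subtype_val).mem_nhds hxO
      exact Filter.eventuallyEq_of_mem hnb fun z hz => (hfg z hz).symm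
    rcases lt_trichotomy (x:ℝ) (t 0) with hx | hx | hx
    · exact key (Iio (t 0)) isOpen_Iio hx (fun _ => 0) continuous_const
        (fun z hz => hfzero_lo z hz)
    · exact absurd (show t 0 ∈ B by rw [← hx]; exact x.2) (htB 0)
    · rcases lt_trichotomy (x:ℝ) b with hxb | hxb | hxb
      · have hP : ∃ N, (x:ℝ) < t N := by
          have h1 : ∀ᶠ n in Filter.atTop, (x:ℝ) < t n :=
            htend.eventually (eventually_gt_nhds hxb)
          exact h1.exists
        have hks : (x:ℝ) < t (Nat.find hP) := Nat.find_spec hP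
        rcases Nat.eq_zero_or_pos (Nat.find hP) with h0 | hpos
        · rw [h0] at hks
          exact absurd hks (not_lt.mpr hx.le)
        · obtain ⟨k, hk⟩ := Nat.exists_eq_succ_of_ne_zero (Nat.pos_iff_ne_zero.mp hpos)
          rw [hk] at hks
          have hmin : ¬ (x:ℝ) < t k := Nat.find_min hP (by omega)
          have hlt : t k < (x:ℝ) :=
            lt_of_le_of_ne (not_lt.mp hmin) (fun h => htB k (by rw [h]; exact x.2))
          exact key (Ioo (t k) (t (k+1))) isOpen_Ioo ⟨hlt, hks⟩ (F k) (hFcont k)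
            (fun z hz => hfpiece k z hz)
      · exact absurd (show b ∈ B by rw [← hxb]; exact x.2) hbB
      · exact key (Ioi b) isOpen_Ioi hxb (fun _ => 0) continuous_const
          (fun z hz => hfzero_hi z hz)
  · apply Set.eq_univ_iff_forall.mpr
    intro y
    obtain ⟨n, hn⟩ := exists_nat_ge |y|
    have hy : y ∈ Icc (-(n+1:ℝ)) (n+1:ℝ) := by
      obtain ⟨h1, h2⟩ := abs_le.mp hn
      exact ⟨by linarith, by linarith⟩
    obtain ⟨S, hSsub, hScl, hSunc, hSval⟩ := hFfib n y hy
    obtain ⟨p, hpS, hpB⟩ := bern_meet B hB S hScl hSunc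
    refine ⟨⟨p, hpB⟩, ?_, ?_⟩
    · show _ ∈ U
      rw [← hVU]
      exact hIooV n (hSsub hpS)
    · rw [hfpiece n ⟨p, hpB⟩ (hSsub hpS)]
      exact hSval p hpS
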